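/- Let k be a field and let A be a locally finite ℕ-graded k-algebra with A_{≥1} ≠ 0. If A is projectively simple, then A is a prime ring. If moreover A is connected graded (A_0 = k), then the only nonzero graded prime ideal of A is m = A_{≥1}. -/

import Mathlib

/-!
STATEMENT 1: If `A` is a projectively simple locally finite ℕ-graded `k`-algebra with
`A_{≥1} ≠ 0`, then `A` is a prime ring; and if moreover `A` is connected graded
(`A₀ = k`), then the only nonzero graded prime ideal of `A` is `m = A_{≥1}`.
-/

/-- The underlying `k`-submodule of a two-sided ideal of a `k`-algebra. -/
def TwoSidedIdeal.ksub (k : Type*) {A : Type*} [CommSemiring k] [Ring A] [Algebra k A]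
    (I : TwoSidedIdeal A) : Submodule k A where
  carrier := I
  add_mem' := fun ha hb => I.add_mem ha hb
  zero_mem' := I.zero_mem
  smul_mem' := fun c x hx => by
    rw [Algebra.smul_def]
    exact I.mul_mem_left _ _ hx

/-- Projective simplicity of a locally finite ℕ-graded `k`-algebra. -/
def ProjectivelySimple (k : Type*) {A : Type*} [Field k] [Ring A] [Algebra k A]
    (𝒜 : ℕ → Submodule k A) [GradedAlgebra 𝒜] : Prop :=
  ¬ FiniteDimensional k A ∧
  ∀ I : TwoSidedIdeal A, I ≠ ⊥ →
    (∀ x ∈ I, ∀ n, (DirectSum.decompose 𝒜 x n : A) ∈ I) →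
    FiniteDimensional k (A ⧸ I.ksub k)

/-- A ring is prime iff `a A b = 0` forces `a = 0` or `b = 0`; this is the element-wise
characterization of "the product of two nonzero two-sided ideals is nonzero". -/
def IsPrimeRing' (A : Type*) [Ring A] : Prop :=
  ∀ a b : A, (∀ x : A, a * x * b = 0) → a = 0 ∨ b = 0

section Aux

variable {k A : Type*} [Field k] [Ring A] [Algebra k A]
variable (𝒜 : ℕ → Submodule k A) [GradedAlgebra 𝒜]

/-- degree-`n` component as an additive monoid hom. -/
noncomputable def gcmp (n : ℕ) : A →+ A where
  toFun x := (DirectSum.decompose 𝒜 x n : A)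
  map_zero' := by simp
  map_add' := fun x y => by simp

@[simp] lemma gcmp_apply (n : ℕ) (x : A) : gcmp 𝒜 n x = (DirectSum.decompose 𝒜 x n : A) := rfl

lemma gcmp_mem (n : ℕ) (x : A) : gcmp 𝒜 n x ∈ 𝒜 n := SetLike.coe_mem _

lemma gcmp_same {n : ℕ} {z : A} (hz : z ∈ 𝒜 n) : gcmp 𝒜 n z = z :=
  DirectSum.decompose_of_mem_same 𝒜 hz

lemma gcmp_ne {m n : ℕ} {z : A} (hz : z ∈ 𝒜 m) (h : m ≠ n) : gcmp 𝒜 n z = 0 := by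
  simpa using DirectSum.decompose_of_mem_ne 𝒜 hz h

lemma gcmp_bound (x : A) : ∃ N, ∀ i, N ≤ i → gcmp 𝒜 i x = 0 := by
  classical
  refine ⟨(DirectSum.decompose 𝒜 x).support.sup id + 1, fun i hi => ?_⟩
  have hns : i ∉ (DirectSum.decompose 𝒜 x).support := by
    intro h
    have := Finset.le_sup (f := id) h
    simp only [id] at this
    omega
  simp [DFinsupp.notMem_support_iff.1 hns]

lemma gcmp_sum (x : A) {N : ℕ} (h : ∀ i, N ≤ i → gcmp 𝒜 i x = 0) :
    x = ∑ i ∈ Finset.range N, gcmp 𝒜 i x := by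
  classical
  conv_lhs => rw [← DirectSum.sum_support_decompose 𝒜 x]
  refine Finset.sum_subset ?_ ?_
  · intro i hi
    rw [Finset.mem_range]
    by_contra hlt
    have h0 : gcmp 𝒜 i x = 0 := h i (by omega)
    rw [gcmp_apply, ZeroMemClass.coe_eq_zero] at h0
    exact (DFinsupp.mem_support_iff.1 hi) h0
  · intro i _ hi
    simp [DFinsupp.notMem_support_iff.1 hi]

lemma mul_mul_eq_sum (x c y : A) {Nx Ny : ℕ}
    (hx : ∀ i, Nx ≤ i → gcmp 𝒜 i x = 0) (hy : ∀ j, Ny ≤ j → gcmp 𝒜 j y = 0) :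
    x * c * y = ∑ i ∈ Finset.range Nx, ∑ j ∈ Finset.range Ny,
      gcmp 𝒜 i x * c * gcmp 𝒜 j y := by
  conv_lhs => rw [gcmp_sum 𝒜 x hx, gcmp_sum 𝒜 y hy]
  rw [Finset.sum_mul]
  rw [Finset.sum_mul]
  exact Finset.sum_congr rfl fun i _ => Finset.mul_sum _ _ _

end Aux

section Gen

variable {k A : Type*} [Field k] [Ring A] [Algebra k A]

/-- the two-sided ideal generated by `c`. -/
noncomputable def genIdeal (c : A) : TwoSidedIdeal A :=
  TwoSidedIdeal.mk' (AddSubgroup.closure {w : A | ∃ x y : A, w = x * c * y} : Set A)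
    (AddSubgroup.zero_mem _)
    (fun ha hb => AddSubgroup.add_mem _ ha hb)
    (fun ha => AddSubgroup.neg_mem _ ha)
    (fun {x y} hy => by
      refine AddSubgroup.closure_induction (fun w hw => ?_) ?_ ?_ ?_ hy
      · obtain ⟨u, v, rfl⟩ := hw
        exact AddSubgroup.subset_closure ⟨x * u, v, by rw [mul_assoc, mul_assoc, mul_assoc]⟩
      · simpa using AddSubgroup.zero_mem _
      · intro w₁ w₂ _ _ h1 h2
        rw [mul_add]; exact AddSubgroup.add_mem _ h1 h2
      · intro w _ h1
        rw [mul_neg]; exact AddSubgroup.neg_mem _ h1)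
    (fun {x y} hx => by
      refine AddSubgroup.closure_induction (fun w hw => ?_) ?_ ?_ ?_ hx
      · obtain ⟨u, v, rfl⟩ := hw
        exact AddSubgroup.subset_closure ⟨u, v * y, by rw [mul_assoc, mul_assoc]⟩
      · simpa using AddSubgroup.zero_mem _
      · intro w₁ w₂ _ _ h1 h2
        rw [add_mul]; exact AddSubgroup.add_mem _ h1 h2
      · intro w _ h1
        rw [neg_mul]; exact AddSubgroup.neg_mem _ h1)

lemma mem_genIdeal_iff (c z : A) :
    z ∈ genIdeal c ↔ z ∈ AddSubgroup.closure {w : A | ∃ x y : A, w = x * c * y} :=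
  TwoSidedIdeal.mem_mk' _ _ _ _ _ _ _

lemma self_mem_genIdeal (c : A) : c ∈ genIdeal c := by
  rw [mem_genIdeal_iff]
  exact AddSubgroup.subset_closure ⟨1, 1, by simp⟩

lemma genMem_genIdeal (c x y : A) : x * c * y ∈ genIdeal c := by
  rw [mem_genIdeal_iff]
  exact AddSubgroup.subset_closure ⟨x, y, rfl⟩

variable (𝒜 : ℕ → Submodule k A) [GradedAlgebra 𝒜]

lemma genIdeal_graded {c : A} {d : ℕ} (hc : c ∈ 𝒜 d) :
    ∀ z ∈ genIdeal c, ∀ n, (DirectSum.decompose 𝒜 z n : A) ∈ genIdeal c := by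
  intro z hz n
  rw [mem_genIdeal_iff] at hz
  rw [← gcmp_apply]
  induction hz using AddSubgroup.closure_induction with
  | mem w hw =>
    obtain ⟨x, y, rfl⟩ := hw
    obtain ⟨Nx, hNx⟩ := gcmp_bound 𝒜 x
    obtain ⟨Ny, hNy⟩ := gcmp_bound 𝒜 y
    rw [mul_mul_eq_sum 𝒜 x c y hNx hNy, map_sum]
    refine sum_mem fun i _ => ?_
    rw [map_sum]
    refine sum_mem fun j _ => ?_
    have hmem : gcmp 𝒜 i x * c * gcmp 𝒜 j y ∈ 𝒜 (i + d + j) :=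
      SetLike.mul_mem_graded (SetLike.mul_mem_graded (gcmp_mem 𝒜 i x) hc) (gcmp_mem 𝒜 j y)
    by_cases hn : i + d + j = n
    · rw [gcmp_same 𝒜 (hn ▸ hmem)]
      exact genMem_genIdeal c _ _
    · rw [gcmp_ne 𝒜 hmem hn]
      exact TwoSidedIdeal.zero_mem _
  | zero => simp [TwoSidedIdeal.zero_mem]
  | add w₁ w₂ _ _ h1 h2 => rw [map_add]; exact TwoSidedIdeal.add_mem _ h1 h2
  | neg w _ h1 => rw [map_neg]; exact TwoSidedIdeal.neg_mem _ h1

lemma genIdeal_mul_zero {a b : A} (h : ∀ z : A, a * z * b = 0) :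
    ∀ u ∈ genIdeal a, ∀ v ∈ genIdeal b, u * v = 0 := by
  intro u hu
  rw [mem_genIdeal_iff] at hu
  induction hu using AddSubgroup.closure_induction with
  | mem w hw =>
    obtain ⟨x, y, rfl⟩ := hw
    intro v hv
    rw [mem_genIdeal_iff] at hv
    induction hv using AddSubgroup.closure_induction with
    | mem w' hw' =>
      obtain ⟨x', y', rfl⟩ := hw'
      have : a * (y * x') * b = 0 := h _
      calc x * a * y * (x' * b * y') = x * (a * (y * x') * b) * y' := by
            simp only [mul_assoc]
        _ = 0 := by rw [this, mul_zero, zero_mul]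
    | zero => exact mul_zero _
    | add v₁ v₂ _ _ h1 h2 => rw [mul_add, h1, h2, add_zero]
    | neg v _ h1 => rw [mul_neg, h1, neg_zero]
  | zero => intro v _; exact zero_mul _
  | add u₁ u₂ _ _ h1 h2 => intro v hv; rw [add_mul, h1 v hv, h2 v hv, add_zero]
  | neg u _ h1 => intro v hv; rw [neg_mul, h1 v hv, neg_zero]

end Gen

section Main

variable {k A : Type*} [Field k] [Ring A] [Algebra k A]
variable (𝒜 : ℕ → Submodule k A) [GradedAlgebra 𝒜]

lemma support_nonempty {a : A} (ha : a ≠ 0)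
    [∀ (i : ℕ) (x : 𝒜 i), Decidable (x ≠ 0)] :
    (DirectSum.decompose 𝒜 a).support.Nonempty := by
  rw [Finset.nonempty_iff_ne_empty]
  intro h
  apply ha
  conv_lhs => rw [← DirectSum.sum_support_decompose 𝒜 a]
  rw [h, Finset.sum_empty]

lemma top_comp {a b : A} (hab : ∀ z : A, a * z * b = 0) (ha : a ≠ 0) (hb : b ≠ 0) :
    ∃ d e : ℕ, gcmp 𝒜 d a ≠ 0 ∧ gcmp 𝒜 e b ≠ 0 ∧
      ∀ z : A, gcmp 𝒜 d a * z * gcmp 𝒜 e b = 0 := by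
  classical
  set d := ((DirectSum.decompose 𝒜 a).support.max' (support_nonempty 𝒜 ha)) with hd
  set e := ((DirectSum.decompose 𝒜 b).support.max' (support_nonempty 𝒜 hb)) with he
  have hda : ∀ i, d + 1 ≤ i → gcmp 𝒜 i a = 0 := by
    intro i hi
    have : i ∉ (DirectSum.decompose 𝒜 a).support := by
      intro h
      have := Finset.le_max' _ i h
      omega
    simp [DFinsupp.notMem_support_iff.1 this]
  have heb : ∀ j, e + 1 ≤ j → gcmp 𝒜 j b = 0 := by
    intro j hj
    have : j ∉ (DirectSum.decompose 𝒜 b).support := by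
      intro h
      have := Finset.le_max' _ j h
      omega
    simp [DFinsupp.notMem_support_iff.1 this]
  have hdne : gcmp 𝒜 d a ≠ 0 := by
    have := Finset.max'_mem _ (support_nonempty 𝒜 ha)
    rw [DFinsupp.mem_support_iff] at this
    simpa [gcmp_apply, ZeroMemClass.coe_eq_zero] using this
  have hene : gcmp 𝒜 e b ≠ 0 := by
    have := Finset.max'_mem _ (support_nonempty 𝒜 hb)
    rw [DFinsupp.mem_support_iff] at this
    simpa [gcmp_apply, ZeroMemClass.coe_eq_zero] using this
  refine ⟨d, e, hdne, hene, ?_⟩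
  -- first for homogeneous z
  have key : ∀ (m : ℕ) (z : A), z ∈ 𝒜 m → gcmp 𝒜 d a * z * gcmp 𝒜 e b = 0 := by
    intro m z hz
    have h0 : gcmp 𝒜 (d + m + e) (a * z * b) = 0 := by
      rw [hab z, map_zero]
    rw [mul_mul_eq_sum 𝒜 a z b hda heb, map_sum] at h0
    rw [Finset.sum_eq_single d] at h0
    · rw [map_sum, Finset.sum_eq_single e] at h0
      · have hmem : gcmp 𝒜 d a * z * gcmp 𝒜 e b ∈ 𝒜 (d + m + e) :=
          SetLike.mul_mem_graded (SetLike.mul_mem_graded (gcmp_mem 𝒜 d a) hz) (gcmp_mem 𝒜 e b)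
        rwa [gcmp_same 𝒜 hmem] at h0
      · intro j hj hjne
        have hmem : gcmp 𝒜 d a * z * gcmp 𝒜 j b ∈ 𝒜 (d + m + j) :=
          SetLike.mul_mem_graded (SetLike.mul_mem_graded (gcmp_mem 𝒜 d a) hz) (gcmp_mem 𝒜 j b)
        refine gcmp_ne 𝒜 hmem ?_
        rw [Finset.mem_range] at hj
        omega
      · intro h
        exact absurd (Finset.self_mem_range_succ e) h
    · intro i hi hine
      rw [map_sum]
      refine Finset.sum_eq_zero fun j hj => ?_
      have hmem : gcmp 𝒜 i a * z * gcmp 𝒜 j b ∈ 𝒜 (i + m + j) :=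
        SetLike.mul_mem_graded (SetLike.mul_mem_graded (gcmp_mem 𝒜 i a) hz) (gcmp_mem 𝒜 j b)
      refine gcmp_ne 𝒜 hmem ?_
      rw [Finset.mem_range] at hi hj
      omega
    · intro h
      exact absurd (Finset.self_mem_range_succ d) h
  intro z
  obtain ⟨Nz, hNz⟩ := gcmp_bound 𝒜 z
  conv_lhs => rw [gcmp_sum 𝒜 z hNz]
  rw [Finset.mul_sum, Finset.sum_mul]
  refine Finset.sum_eq_zero fun m _ => key m _ (gcmp_mem 𝒜 m z)

lemma high_deg_mem (I : TwoSidedIdeal A)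
    (hgr : ∀ x ∈ I, ∀ n, (DirectSum.decompose 𝒜 x n : A) ∈ I)
    (hfd : FiniteDimensional k (A ⧸ I.ksub k)) :
    ∃ N, ∀ n, N ≤ n → ∀ x ∈ 𝒜 n, x ∈ I := by
  classical
  set T : Set ℕ := {n | ∃ x, x ∈ 𝒜 n ∧ x ∉ I} with hT
  have hTfin : T.Finite := by
    rw [← Set.finite_coe_iff]
    haveI : IsNoetherian k (A ⧸ I.ksub k) := IsNoetherian.iff_fg.2 hfd
    choose f hf1 hf2 using fun t : T => t.2
    have hli : LinearIndependent k fun t : T =>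
        Submodule.Quotient.mk (p := I.ksub k) (f t) := by
      rw [linearIndependent_iff']
      intro s g hsum t ht
      by_contra hg
      have hmem : (∑ r ∈ s, g r • f r) ∈ I := by
        have hq : Submodule.Quotient.mk (p := I.ksub k) (∑ r ∈ s, g r • f r) = 0 := by
          rw [← Submodule.mkQ_apply, map_sum]
          simpa using hsum
        exact (Submodule.Quotient.mk_eq_zero _).1 hq
      have hcomp : gcmp 𝒜 (t : ℕ) (∑ r ∈ s, g r • f r) ∈ I := hgr _ hmem _
      rw [map_sum, Finset.sum_eq_single_of_mem t ht] at hcomp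
      · have : g t • f t ∈ I := by
          rwa [gcmp_same 𝒜 (Submodule.smul_mem _ _ (hf1 t))] at hcomp
        have : f t ∈ I := by
          have h2 : (g t)⁻¹ • (g t • f t) ∈ I := by
            rw [Algebra.smul_def]
            exact I.mul_mem_left _ _ this
          rwa [smul_smul, inv_mul_cancel₀ hg, one_smul] at h2
        exact hf2 t this
      · intro r _ hrt
        refine gcmp_ne 𝒜 (Submodule.smul_mem _ _ (hf1 r)) ?_
        exact fun h => hrt (Subtype.ext h)
    exact hli.finite_of_isNoetherian
  obtain ⟨N, hN⟩ := hTfin.bddAbove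
  refine ⟨N + 1, fun n hn x hx => ?_⟩
  by_contra hxI
  have : n ∈ T := ⟨x, hx, hxI⟩
  have := hN this
  omega

lemma exists_high_nonzero (hlf : ∀ n, FiniteDimensional k (𝒜 n))
    (hnf : ¬ FiniteDimensional k A) (N : ℕ) :
    ∃ n, N ≤ n ∧ ∃ c ∈ 𝒜 n, c ≠ 0 := by
  by_contra h
  push_neg at h
  apply hnf
  have hW : ∀ x : A, x ∈ (Finset.range N).sup 𝒜 := by
    intro x
    have hx : ∀ i, N ≤ i → gcmp 𝒜 i x = 0 := fun i hi => h i hi _ (gcmp_mem 𝒜 i x)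
    rw [gcmp_sum 𝒜 x hx]
    exact sum_mem fun i hi => SetLike.le_def.mp (Finset.le_sup hi) (gcmp_mem 𝒜 i x)
  have htop : (Finset.range N).sup 𝒜 = ⊤ := eq_top_iff.2 fun x _ => hW x
  haveI : ∀ i, FiniteDimensional k (𝒜 i) := hlf
  haveI : FiniteDimensional k ↥((Finset.range N).sup 𝒜) :=
    Submodule.finiteDimensional_finset_sup _ _
  haveI : FiniteDimensional k ((⊤ : Submodule k A)) := htop ▸ inferInstance
  exact Module.Finite.equiv (Submodule.topEquiv)

lemma genIdeal_sub_fin {c : A} {dc N : ℕ} (hc : c ∈ 𝒜 dc) (hdN : N ≤ dc)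
    (hsq : ∀ i j, N ≤ i → N ≤ j → ∀ u ∈ 𝒜 i, ∀ v ∈ 𝒜 j, u * v = 0) :
    ∀ z ∈ genIdeal c, z ∈ (Finset.range (dc + 2 * N + 1)).sup 𝒜 := by
  intro z hz
  rw [mem_genIdeal_iff] at hz
  induction hz using AddSubgroup.closure_induction with
  | mem w hw =>
    obtain ⟨x, y, rfl⟩ := hw
    obtain ⟨Nx, hNx⟩ := gcmp_bound 𝒜 x
    obtain ⟨Ny, hNy⟩ := gcmp_bound 𝒜 y
    rw [mul_mul_eq_sum 𝒜 x c y hNx hNy]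
    refine sum_mem fun i _ => sum_mem fun j _ => ?_
    by_cases hiN : N ≤ i
    · have : gcmp 𝒜 i x * c = 0 := hsq i dc hiN hdN _ (gcmp_mem 𝒜 i x) _ hc
      rw [this, zero_mul]
      exact zero_mem _
    · by_cases hjN : N ≤ j
      · have : c * gcmp 𝒜 j y = 0 := hsq dc j hdN hjN _ hc _ (gcmp_mem 𝒜 j y)
        rw [mul_assoc, this, mul_zero]
        exact zero_mem _
      · have hmem : gcmp 𝒜 i x * c * gcmp 𝒜 j y ∈ 𝒜 (i + dc + j) :=
          SetLike.mul_mem_graded (SetLike.mul_mem_graded (gcmp_mem 𝒜 i x) hc) (gcmp_mem 𝒜 j y)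
        have hlt : i + dc + j ∈ Finset.range (dc + 2 * N + 1) := by
          rw [Finset.mem_range]; omega
        exact SetLike.le_def.mp (Finset.le_sup hlt) hmem
  | zero => exact zero_mem _
  | add w₁ w₂ _ _ h1 h2 => exact add_mem h1 h2
  | neg w _ h1 => exact neg_mem h1

end Main

theorem projectively_simple_prime
    (k : Type*) {A : Type*} [Field k] [Ring A] [Algebra k A]
    (𝒜 : ℕ → Submodule k A) [GradedAlgebra 𝒜]
    (hlf : ∀ n, FiniteDimensional k (𝒜 n))
    (hm : ∃ n, 1 ≤ n ∧ 𝒜 n ≠ ⊥)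
    (hps : ProjectivelySimple k 𝒜) :
    IsPrimeRing' A ∧
    -- if furthermore `A` is connected graded, every nonzero graded prime (two-sided) ideal
    -- `P` of `A` equals `m = A_{≥1}`, i.e. consists exactly of the elements with vanishing
    -- degree-zero component
    (𝒜 0 = (1 : Submodule k A) →
      ∀ P : TwoSidedIdeal A, P ≠ ⊥ → P ≠ ⊤ →
        (∀ x ∈ P, ∀ n, (DirectSum.decompose 𝒜 x n : A) ∈ P) →
        (∀ a b : A, (∀ x : A, a * x * b ∈ P) → a ∈ P ∨ b ∈ P) →
        ∀ x : A, x ∈ P ↔ (DirectSum.decompose 𝒜 x 0 : A) = 0) := by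
  obtain ⟨hnf, hI⟩ := hps
  constructor
  · -- primeness
    intro a b hab
    by_contra hcon
    push_neg at hcon
    obtain ⟨ha, hb⟩ := hcon
    obtain ⟨d, e, had, hbe, h0⟩ := top_comp 𝒜 hab ha hb
    have haI : genIdeal (gcmp 𝒜 d a) ≠ ⊥ := by
      intro h
      apply had
      have := self_mem_genIdeal (gcmp 𝒜 d a)
      rwa [h, TwoSidedIdeal.mem_bot] at this
    have hbJ : genIdeal (gcmp 𝒜 e b) ≠ ⊥ := by
      intro h
      apply hbe
      have := self_mem_genIdeal (gcmp 𝒜 e b)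
      rwa [h, TwoSidedIdeal.mem_bot] at this
    have hfa := hI _ haI (genIdeal_graded 𝒜 (gcmp_mem 𝒜 d a))
    have hfb := hI _ hbJ (genIdeal_graded 𝒜 (gcmp_mem 𝒜 e b))
    obtain ⟨N₁, hN₁⟩ := high_deg_mem 𝒜 _ (genIdeal_graded 𝒜 (gcmp_mem 𝒜 d a)) hfa
    obtain ⟨N₂, hN₂⟩ := high_deg_mem 𝒜 _ (genIdeal_graded 𝒜 (gcmp_mem 𝒜 e b)) hfb
    set N := max N₁ N₂ with hN
    have hsq : ∀ i j, N ≤ i → N ≤ j → ∀ u ∈ 𝒜 i, ∀ v ∈ 𝒜 j, u * v = 0 := by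
      intro i j hi hj u hu v hv
      exact genIdeal_mul_zero h0 u
        (hN₁ i (le_trans (le_max_left _ _) hi) u hu) v
        (hN₂ j (le_trans (le_max_right _ _) hj) v hv)
    obtain ⟨n, hn, c, hc, hcne⟩ := exists_high_nonzero 𝒜 hlf hnf N
    have hKne : genIdeal c ≠ ⊥ := by
      intro h
      apply hcne
      have := self_mem_genIdeal c
      rwa [h, TwoSidedIdeal.mem_bot] at this
    have hfK := hI _ hKne (genIdeal_graded 𝒜 hc)
    have hsub : (genIdeal c).ksub k ≤ (Finset.range (n + 2 * N + 1)).sup 𝒜 :=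
      fun z hz => genIdeal_sub_fin 𝒜 hc hn hsq z hz
    haveI : ∀ i, FiniteDimensional k (𝒜 i) := hlf
    haveI : FiniteDimensional k ↥((Finset.range (n + 2 * N + 1)).sup 𝒜) :=
      Submodule.finiteDimensional_finset_sup _ _
    haveI hfS : FiniteDimensional k ((genIdeal c).ksub k) :=
      Submodule.finiteDimensional_of_le hsub
    have hnoeth : IsNoetherian k A :=
      (isNoetherian_iff_submodule_quotient ((genIdeal c).ksub k)).2
        ⟨IsNoetherian.iff_fg.2 hfS, IsNoetherian.iff_fg.2 hfK⟩
    exact hnf (IsNoetherian.iff_fg.1 hnoeth)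
  · -- connected graded case
    intro hconn P hPbot hPtop hPgr hPpr x
    have hfP := hI P hPbot hPgr
    obtain ⟨N₀, hN₀⟩ := high_deg_mem 𝒜 P hPgr hfP
    have hstep : ∀ j n, 1 ≤ n → N₀ + 1 ≤ n + j → ∀ y ∈ 𝒜 n, y ∈ P := by
      intro j
      induction j with
      | zero => intro n h1 hhN y hy; exact hN₀ n (by omega) y hy
      | succ j ih =>
        intro n h1 hhN y hy
        by_cases hc2 : N₀ + 1 ≤ n + j
        · exact ih n h1 hc2 y hy
        · have hyy : ∀ z : A, y * z * y ∈ P := by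
            intro z
            obtain ⟨Nz, hNz⟩ := gcmp_bound 𝒜 z
            have hrw : y * z * y = ∑ m ∈ Finset.range Nz, y * gcmp 𝒜 m z * y := by
              conv_lhs => rw [gcmp_sum 𝒜 z hNz]
              rw [Finset.mul_sum, Finset.sum_mul]
            rw [hrw]
            refine sum_mem fun m _ => ?_
            have hmem : y * gcmp 𝒜 m z * y ∈ 𝒜 (n + m + n) :=
              SetLike.mul_mem_graded (SetLike.mul_mem_graded hy (gcmp_mem 𝒜 m z)) hy
            exact ih (n + m + n) (by omega) (by omega) _ hmem
          rcases hPpr y y hyy with h | h <;> exact h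
    have hmem_high : ∀ m, 1 ≤ m → ∀ y ∈ 𝒜 m, y ∈ P := fun m h1 =>
      hstep (N₀ + 1) m h1 (by omega)
    constructor
    · intro hxP
      have h0 : (DirectSum.decompose 𝒜 x 0 : A) ∈ P := hPgr x hxP 0
      have h1 : (DirectSum.decompose 𝒜 x 0 : A) ∈ (1 : Submodule k A) :=
        hconn ▸ gcmp_mem 𝒜 0 x
      obtain ⟨c, hc⟩ := Submodule.mem_one.1 h1
      by_contra hne
      have hcne : c ≠ 0 := fun h => hne (by rw [← hc, h, map_zero])
      have hone : (1 : A) ∈ P := by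
        have := P.mul_mem_left (algebraMap k A c⁻¹) _ h0
        rwa [← hc, ← map_mul, inv_mul_cancel₀ hcne, map_one] at this
      exact hPtop (TwoSidedIdeal.eq_top P hone)
    · intro h0
      obtain ⟨Nx, hNx⟩ := gcmp_bound 𝒜 x
      rw [gcmp_sum 𝒜 x hNx]
      refine sum_mem fun i _ => ?_
      rcases Nat.eq_zero_or_pos i with hi | hi
      · subst hi
        rw [gcmp_apply, h0]
        exact P.zero_mem
      · exact hmem_high i hi _ (gcmp_mem 𝒜 i x)
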